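/- Threshold for dominance: Given s, g : Fin n → ℝ with g i₀ > g j for all j ≠ i₀, there exists α₀ ≥ 0 such that for all α ≥ α₀, the softmax probability of i₀ under s + α • g exceeds 1/2. -/

import Mathlib

/-- Softmax distribution over scores on `Fin n`. -/
noncomputable def softmax {n : ℕ} (s : Fin n → ℝ) (i : Fin n) : ℝ :=
  Real.exp (s i) / ∑ j, Real.exp (s j)

/-- Threshold for dominance: if `i₀` uniquely maximizes `g`, then there is a gate value
`α₀ ≥ 0` beyond which the softmax probability of `i₀` under `s + α • g` exceeds `1/2`. -/
theorem dominance_threshold {n : ℕ} (hn : 2 ≤ n) (s g : Fin n → ℝ) (i₀ : Fin n)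
    (hmax : ∀ j, j ≠ i₀ → g j < g i₀) :
    ∃ α₀ : ℝ, 0 ≤ α₀ ∧ ∀ α : ℝ, α₀ ≤ α →
      1 / 2 < softmax (fun j => s j + α * g j) i₀ := by
  have hne : (Finset.univ.erase i₀).Nonempty := by
    have hcard : 1 < Fintype.card (Fin n) := by rw [Fintype.card_fin]; omega
    obtain ⟨j, hj⟩ := Fintype.exists_ne_of_one_lt_card hcard i₀
    exact ⟨j, Finset.mem_erase.2 ⟨hj, Finset.mem_univ j⟩⟩
  set E := Finset.univ.erase i₀ with hE
  set δ := E.inf' hne (fun j => g i₀ - g j) with hδdef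
  set M := E.sup' hne (fun j => s j - s i₀) with hMdef
  have hδpos : 0 < δ := by
    rw [hδdef, Finset.lt_inf'_iff]
    intro j hj
    exact sub_pos.2 (hmax j (Finset.mem_erase.1 hj).1)
  have hn2 : (2:ℝ) ≤ (n:ℝ) := by exact_mod_cast hn
  have hnpos : (0:ℝ) < (n:ℝ) := by linarith
  refine ⟨max 0 ((M + Real.log n)/δ), le_max_left _ _, ?_⟩
  intro α hα
  have hα0 : 0 ≤ α := le_trans (le_max_left _ _) hα
  have hαδ : M + Real.log n ≤ α * δ := by
    have h1 : (M + Real.log n)/δ ≤ α := le_trans (le_max_right _ _) hα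
    calc M + Real.log n = ((M + Real.log n)/δ) * δ := by field_simp
    _ ≤ α * δ := by exact mul_le_mul_of_nonneg_right h1 hδpos.le
  set t := fun j => s j + α * g j with ht
  have hterm : ∀ j ∈ E, Real.exp (t j) ≤ Real.exp (t i₀) / n := by
    intro j hj
    have h1 : s j - s i₀ ≤ M := Finset.le_sup' (fun j => s j - s i₀) hj
    have h2 : δ ≤ g i₀ - g j := Finset.inf'_le _ hj
    have h3 : α * δ ≤ α * (g i₀ - g j) := mul_le_mul_of_nonneg_left h2 hα0
    have h4 : t j ≤ t i₀ - Real.log n := by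
      simp only [ht]; nlinarith
    calc Real.exp (t j) ≤ Real.exp (t i₀ - Real.log n) := Real.exp_le_exp.2 h4
    _ = Real.exp (t i₀) / n := by
        rw [Real.exp_sub, Real.exp_log hnpos]
  have hcardE : (E.card : ℝ) < n := by
    have : E.card = n - 1 := by
      rw [hE, Finset.card_erase_of_mem (Finset.mem_univ _)]
      simp
    rw [this]
    have : (n:ℕ) - 1 < n := by omega
    exact_mod_cast this
  have hepos : 0 < Real.exp (t i₀) := Real.exp_pos _
  have hS : ∑ j ∈ E, Real.exp (t j) < Real.exp (t i₀) := by
    calc ∑ j ∈ E, Real.exp (t j) ≤ ∑ _j ∈ E, Real.exp (t i₀) / n :=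
          Finset.sum_le_sum hterm
    _ = E.card * (Real.exp (t i₀) / n) := by rw [Finset.sum_const, nsmul_eq_mul]
    _ < n * (Real.exp (t i₀) / n) := by
          apply mul_lt_mul_of_pos_right hcardE (by positivity)
    _ = Real.exp (t i₀) := by field_simp
  have hD : ∑ j, Real.exp (t j) = Real.exp (t i₀) + ∑ j ∈ E, Real.exp (t j) := by
    rw [hE, ← Finset.add_sum_erase _ _ (Finset.mem_univ i₀)]
  have hDpos : 0 < ∑ j, Real.exp (t j) := by
    rw [hD]; positivity
  rw [softmax, lt_div_iff₀ hDpos, hD]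
  linarith
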